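/- arXiv:2004.10499 — 2 statements merged into one kernel-verified Lean document; each statement's English description precedes it below -/
import Mathlib

section
/- Let X, Y, Z be independent exponential random variables with rates λx, λy, λz > 0, and let K > 0, M, L ≥ 0, Λ > 0. Then Pr[X < Z·Y·K + Y·M + L and Y > Λ] = e^{−λy Λ} + (λy λz)/(λx K) · e^{−λx(L + Λ M) − λy Λ} · e^{μξ} · Ei(−μξ), where μ = λz + λx Λ K and ξ = M/K + λy/(λx K). -/
open MeasureTheory ProbabilityTheory Real

/-- The exponential integral `Ei`. For `x < 0` the defining integral
`Ei x = -∫_{-x}^∞ e^{-t}/t dt` is a proper integral. -/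
noncomputable def Ei (x : ℝ) : ℝ := -∫ t in Set.Ioi (-x), Real.exp (-t) / t

open Set
open scoped ENNReal

lemma aux_exp_int {b : ℝ} (hb : 0 < b) (t : ℝ) :
    ∫ z in Ioi t, Real.exp (-(b*z)) = Real.exp (-(b*t)) / b := by
  have := MeasureTheory.integral_comp_mul_left_Ioi (fun s => Real.exp (-s)) t hb
  simp only [smul_eq_mul] at this
  rw [this, integral_exp_neg_Ioi]
  rw [div_eq_inv_mul]

-- integrability of exp(-s)/s on Ioi t, t > 0

lemma aux_shift (g : ℝ → ℝ) (t d : ℝ) :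
    ∫ y in Ioi (t - d), g (y + d) = ∫ s in Ioi t, g s := by
  have h1 : MeasurePreserving (fun x : ℝ => x + d) volume volume :=
    measurePreserving_add_right volume d
  have h2 : MeasurableEmbedding (fun x : ℝ => x + d) :=
    (MeasurableEquiv.addRight d).measurableEmbedding
  have := h1.setIntegral_preimage_emb h2 g (Ioi t)
  rwa [preimage_add_const_Ioi] at this

lemma aux_subst {a c lz Λ : ℝ} (ha : 0 < a) (hc : 0 < c) (hlz : 0 < lz) :
    ∫ y in Ioi Λ, Real.exp (-(a*y)) / (lz + c*y)
      = c⁻¹ * Real.exp (lz*(a/c)) * ∫ s in Ioi (lz*(a/c) + a*Λ), Real.exp (-s) / s := by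
  set d := lz*(a/c) with hd
  have hshift := aux_shift (fun s => Real.exp (-s) / s) (d + a*Λ) d
  have hsc := MeasureTheory.integral_comp_mul_left_Ioi
      (fun y => Real.exp (-(y+d)) / (y+d)) Λ ha
  simp only [smul_eq_mul] at hsc
  have hΛ : d + a*Λ - d = a*Λ := by ring
  rw [hΛ] at hshift
  have key : ∀ y : ℝ, Real.exp (-(a*y+d)) / (a*y+d)
      = Real.exp (-d) / (a/c) * (Real.exp (-(a*y)) / (lz + c*y)) := by
    intro y
    have h1 : a*y + d = (a/c) * (lz + c*y) := by rw [hd]; field_simp [hc.ne']; ring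
    have h2 : -(a*y+d) = -(a*y) + -d := by ring
    rw [h2, Real.exp_add, h1, div_mul_div_comm, mul_comm (Real.exp (-(a*y)))]
  have hsc2 : ∫ y in Ioi (a*Λ), Real.exp (-(y+d))/(y+d)
      = a * ∫ x in Ioi Λ, Real.exp (-(a*x+d))/(a*x+d) := by
    rw [hsc]; field_simp
  rw [← hshift, hsc2]
  simp only [key]
  rw [MeasureTheory.integral_const_mul, Real.exp_neg]
  field_simp
  ring_nf
  congr 1; ext y; ring

lemma aux_expMeasure_def (r : ℝ) : expMeasure r = volume.withDensity (exponentialPDF r) := rfl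

lemma aux_expMeasure_Iio {r : ℝ} (hr : 0 < r) (c : ℝ) :
    expMeasure r (Iio c) = ENNReal.ofReal (if 0 ≤ c then 1 - Real.exp (-(r*c)) else 0) := by
  rw [aux_expMeasure_def, withDensity_apply _ measurableSet_Iio,
    setLIntegral_congr (Iio_ae_eq_Iic (μ := volume) (a := c)),
    lintegral_exponentialPDF_eq_antiDeriv hr]

lemma aux_lintegral_expMeasure {r : ℝ} (f : ℝ → ℝ≥0∞) (hf : Measurable f) :
    ∫⁻ x, f x ∂(expMeasure r) = ∫⁻ x, exponentialPDF r x * f x ∂volume := by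
  have hm : Measurable (exponentialPDF r) := (measurable_exponentialPDFReal r).ennreal_ofReal
  rw [aux_expMeasure_def, lintegral_withDensity_eq_lintegral_mul _ hm hf]
  rfl

lemma aux_z {lx lz y K M L : ℝ} (hlx : 0 < lx) (hlz : 0 < lz) (hy : 0 < y)
    (hK : 0 < K) (hM : 0 ≤ M) (hL : 0 ≤ L) :
    ∫ z in Ioi 0, lz * Real.exp (-(lz*z)) * (1 - Real.exp (-(lx*(z*y*K+y*M+L))))
      = 1 - lz * Real.exp (-(lx*(y*M+L))) / (lz + lx*(y*K)) := by
  have hb : 0 < lz + lx*(y*K) := by positivity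
  have hptw : ∀ z : ℝ, lz * Real.exp (-(lz*z)) * (1 - Real.exp (-(lx*(z*y*K+y*M+L))))
      = lz * Real.exp (-(lz*z))
        - lz * Real.exp (-(lx*(y*M+L))) * Real.exp (-((lz + lx*(y*K))*z)) := by
    intro z
    rw [mul_sub, mul_one, mul_assoc lz, ← Real.exp_add, mul_assoc lz, ← Real.exp_add]
    ring_nf
  simp only [hptw]
  rw [integral_sub, MeasureTheory.integral_const_mul, MeasureTheory.integral_const_mul, aux_exp_int hlz 0,
    aux_exp_int hb 0]
  · simp only [mul_zero, neg_zero, Real.exp_zero]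
    field_simp
  · simpa [neg_mul] using (exp_neg_integrableOn_Ioi 0 hlz).const_mul lz
  · refine ((exp_neg_integrableOn_Ioi 0 hb).const_mul
      (lz * Real.exp (-(lx*(y*M+L))))).congr ?_
    filter_upwards with z
    rw [neg_mul]

lemma aux_inner {lx lz y K M L : ℝ} (hlx : 0 < lx) (hlz : 0 < lz) (hy : 0 < y)
    (hK : 0 < K) (hM : 0 ≤ M) (hL : 0 ≤ L) :
    ((expMeasure lz).prod (expMeasure lx)) {q : ℝ × ℝ | q.2 < q.1*y*K + y*M + L}
      = ENNReal.ofReal (1 - lz * Real.exp (-(lx*(y*M+L))) / (lz + lx*(y*K))) := by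
  haveI : IsProbabilityMeasure (expMeasure lx) := isProbabilityMeasure_expMeasure hlx
  have hB : MeasurableSet {q : ℝ × ℝ | q.2 < q.1*y*K + y*M + L} := by
    exact measurableSet_lt measurable_snd (by fun_prop)
  rw [Measure.prod_apply hB]
  have hsec : ∀ z : ℝ, (Prod.mk z ⁻¹' {q : ℝ × ℝ | q.2 < q.1*y*K + y*M + L})
      = Iio (z*y*K + y*M + L) := fun z => rfl
  simp only [hsec]
  have hfm : Measurable (fun z : ℝ => expMeasure lx (Iio (z*y*K + y*M + L))) := by
    simp only [aux_expMeasure_Iio hlx]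
    apply Measurable.ennreal_ofReal
    exact Measurable.ite (measurableSet_le measurable_const (by fun_prop))
      (by fun_prop) measurable_const
  rw [aux_lintegral_expMeasure _ hfm]
  rw [← lintegral_add_compl _ (measurableSet_Ioi (a := (0:ℝ)))]
  have h0 : ∫⁻ z in (Ioi (0:ℝ))ᶜ, exponentialPDF lz z
      * expMeasure lx (Iio (z*y*K + y*M + L)) = 0 := by
    rw [compl_Ioi, setLIntegral_congr (Iio_ae_eq_Iic (μ := volume) (a := (0:ℝ))).symm]
    rw [setLIntegral_congr_fun measurableSet_Iio
      (fun z (hz : z < 0) => by rw [exponentialPDF_of_neg hz, zero_mul])]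
    simp
  rw [h0, add_zero]
  have hptw : ∀ z ∈ Ioi (0:ℝ), exponentialPDF lz z
      * expMeasure lx (Iio (z*y*K + y*M + L))
      = ENNReal.ofReal (lz * Real.exp (-(lz*z)) * (1 - Real.exp (-(lx*(z*y*K+y*M+L))))) := by
    intro z hz
    have hc : 0 < z*y*K + y*M + L := by
      have : 0 < z*y*K := by exact mul_pos (mul_pos hz hy) hK
      positivity
    rw [exponentialPDF_of_nonneg (le_of_lt hz), aux_expMeasure_Iio hlx, if_pos hc.le,
      ← ENNReal.ofReal_mul (by positivity)]
  rw [setLIntegral_congr_fun measurableSet_Ioi hptw]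
  rw [← ofReal_integral_eq_lintegral_ofReal]
  · rw [aux_z hlx hlz hy hK hM hL]
  · -- integrability
    have hbound : IntegrableOn (fun z => lz * Real.exp (-(lz*z))) (Ioi 0) := by
      have h := (exp_neg_integrableOn_Ioi 0 hlz).const_mul lz
      simp only [neg_mul] at h
      exact h
    refine hbound.mono' ?_ ?_
    · refine ContinuousOn.aestronglyMeasurable ?_ measurableSet_Ioi
      apply Continuous.continuousOn
      continuity
    · filter_upwards [ae_restrict_mem measurableSet_Ioi] with z hz
      have hc : 0 ≤ lx*(z*y*K + y*M + L) := by
        have : 0 < z*y*K := mul_pos (mul_pos hz hy) hK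
        positivity
      have h1 : 0 ≤ 1 - Real.exp (-(lx*(z*y*K+y*M+L))) := by
        simp only [sub_nonneg, Real.exp_le_one_iff, neg_nonpos]; exact hc
      have h2 : 1 - Real.exp (-(lx*(z*y*K+y*M+L))) ≤ 1 := by
        have := Real.exp_pos (-(lx*(z*y*K+y*M+L))); linarith
      rw [Real.norm_eq_abs, abs_mul, abs_of_nonneg (by positivity : (0:ℝ) ≤ lz * Real.exp (-(lz*z))), abs_of_nonneg h1]
      nlinarith [mul_pos hlz (Real.exp_pos (-(lz*z)))]
  · filter_upwards [ae_restrict_mem measurableSet_Ioi] with z hz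
    have hc : 0 ≤ lx*(z*y*K + y*M + L) := by
      have : 0 < z*y*K := mul_pos (mul_pos hz hy) hK
      positivity
    have h1 : 0 ≤ 1 - Real.exp (-(lx*(z*y*K+y*M+L))) := by
      simp only [sub_nonneg, Real.exp_le_one_iff, neg_nonpos]; exact hc
    positivity

lemma aux_int2 {a c lz Λ : ℝ} (ha : 0 < a) (hc : 0 < c) (hlz : 0 < lz) (hΛ : 0 < Λ) :
    IntegrableOn (fun y => Real.exp (-(a*y)) / (lz + c*y)) (Ioi Λ) := by
  have hbound : IntegrableOn (fun y => Real.exp (-(a*y)) / lz) (Ioi Λ) := by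
    have h := (exp_neg_integrableOn_Ioi Λ ha).div_const lz
    simp only [neg_mul] at h
    exact h
  have hpos : ∀ y ∈ Ioi Λ, 0 < lz + c*y := fun y hy => by
    have : 0 < c * y := mul_pos hc (hΛ.trans hy)
    linarith
  refine hbound.mono' ?_ ?_
  · refine ContinuousOn.aestronglyMeasurable ?_ measurableSet_Ioi
    exact ContinuousOn.div (by fun_prop) (by fun_prop) (fun y hy => (hpos y hy).ne')
  · filter_upwards [ae_restrict_mem measurableSet_Ioi] with y hy
    rw [Real.norm_eq_abs, abs_div, abs_of_pos (Real.exp_pos _), abs_of_pos (hpos y hy)]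
    apply div_le_div_of_nonneg_left (Real.exp_pos _).le hlz
    nlinarith [mul_pos hc (hΛ.trans hy)]

lemma aux_y {a c lz ly Λ C : ℝ} (ha : 0 < a) (hc : 0 < c) (hlz : 0 < lz) (hly : 0 < ly)
    (hΛ : 0 < Λ) :
    ∫ y in Ioi Λ, (ly * Real.exp (-(ly*y)) - C * (Real.exp (-(a*y)) / (lz + c*y)))
      = Real.exp (-(ly*Λ))
        - C * (c⁻¹ * Real.exp (lz*(a/c)) * ∫ s in Ioi (lz*(a/c) + a*Λ), Real.exp (-s) / s) := by
  rw [integral_sub, MeasureTheory.integral_const_mul, MeasureTheory.integral_const_mul,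
    aux_exp_int hly Λ, aux_subst ha hc hlz]
  · field_simp
  · simpa [neg_mul] using (exp_neg_integrableOn_Ioi Λ hly).const_mul ly
  · exact (aux_int2 ha hc hlz hΛ).const_mul C

theorem stmt3
    {Ω : Type*} [MeasurableSpace Ω] (μ : Measure Ω) [IsProbabilityMeasure μ]
    (X Y Z : Ω → ℝ) (hX : Measurable X) (hY : Measurable Y) (hZ : Measurable Z)
    (hind : iIndepFun ![X, Y, Z] μ)
    (lx ly lz : ℝ) (hlx : 0 < lx) (hly : 0 < ly) (hlz : 0 < lz)
    (hXlaw : Measure.map X μ = expMeasure lx)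
    (hYlaw : Measure.map Y μ = expMeasure ly)
    (hZlaw : Measure.map Z μ = expMeasure lz)
    (K M L Λ : ℝ) (hK : 0 < K) (hM : 0 ≤ M) (hL : 0 ≤ L) (hΛ : 0 < Λ)
    (m ξ : ℝ) (hm : m = lz + lx * Λ * K) (hξ : ξ = M / K + ly / (lx * K)) :
    μ {ω | X ω < Z ω * Y ω * K + Y ω * M + L ∧ Y ω > Λ}
      = ENNReal.ofReal (Real.exp (-ly * Λ)
          + (ly * lz) / (lx * K) * Real.exp (-lx * (L + Λ * M) - ly * Λ)
            * Real.exp (m * ξ) * Ei (-(m * ξ))) := by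
  haveI : IsProbabilityMeasure (expMeasure lx) := isProbabilityMeasure_expMeasure hlx
  haveI : IsProbabilityMeasure (expMeasure lz) := isProbabilityMeasure_expMeasure hlz
  set a : ℝ := ly + lx * M with ha_def
  set c : ℝ := lx * K with hc_def
  have ha : 0 < a := by positivity
  have hc : 0 < c := by positivity
  set ν : Measure (ℝ × ℝ) := (expMeasure lz).prod (expMeasure lx) with hν
  set A : Set (ℝ × ℝ × ℝ) :=
    {p | p.2.2 < p.2.1 * p.1 * K + p.1 * M + L ∧ p.1 > Λ} with hA_def
  have hA : MeasurableSet A := by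
    rw [hA_def, setOf_and]
    exact (measurableSet_lt (measurable_snd.comp measurable_snd) (by fun_prop)).inter
      (measurableSet_lt measurable_const measurable_fst)
  have hT : Measurable fun ω => (Y ω, (Z ω, X ω)) := hY.prodMk (hZ.prodMk hX)
  have hmap : Measure.map (fun ω => (Y ω, (Z ω, X ω))) μ = (expMeasure ly).prod ν := by
    have hmeas : ∀ i, Measurable (![X, Y, Z] i) := by
      intro i; fin_cases i <;> simpa using ‹_›
    have hZX : IndepFun Z X μ := hind.indepFun (show (2 : Fin 3) ≠ 0 by decide)
    have h1 : Measure.map (fun ω => (Z ω, X ω)) μ = ν := by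
      rw [(indepFun_iff_map_prod_eq_prod_map_map hZ.aemeasurable hX.aemeasurable).mp hZX,
        hZlaw, hXlaw]
    have hY_ZX : IndepFun Y (fun ω => (Z ω, X ω)) μ :=
      (hind.indepFun_prodMk hmeas 2 0 1 (by decide) (by decide)).symm
    rw [(indepFun_iff_map_prod_eq_prod_map_map hY.aemeasurable
        (hZ.prodMk hX).aemeasurable).mp hY_ZX, hYlaw, h1]
  have hset : {ω | X ω < Z ω * Y ω * K + Y ω * M + L ∧ Y ω > Λ}
      = (fun ω => (Y ω, (Z ω, X ω))) ⁻¹' A := rfl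
  rw [hset, ← Measure.map_apply hT hA, hmap, Measure.prod_apply hA]
  have hF : Measurable fun y => ν (Prod.mk y ⁻¹' A) := measurable_measure_prodMk_left hA
  rw [aux_lintegral_expMeasure _ hF]
  -- the integrand vanishes off `Ioi Λ`
  have hzero : ∀ y ∉ Ioi Λ, exponentialPDF ly y * ν (Prod.mk y ⁻¹' A) = 0 := by
    intro y hy
    have : Prod.mk y ⁻¹' A = ∅ := by
      ext q; simp only [hA_def, mem_preimage, mem_setOf_eq, mem_empty_iff_false, iff_false]
      rintro ⟨-, h2⟩; exact hy h2
    rw [this, measure_empty, mul_zero]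
  have hind_eq : ∫⁻ y, exponentialPDF ly y * ν (Prod.mk y ⁻¹' A)
      = ∫⁻ y in Ioi Λ, exponentialPDF ly y * ν (Prod.mk y ⁻¹' A) := by
    rw [← lintegral_indicator measurableSet_Ioi]
    refine lintegral_congr fun y => ?_
    rw [Set.indicator_apply]
    split_ifs with h
    · rfl
    · exact hzero y h
  rw [hind_eq]
  -- pointwise value on `Ioi Λ`
  have hptw : ∀ y ∈ Ioi Λ, exponentialPDF ly y * ν (Prod.mk y ⁻¹' A)
      = ENNReal.ofReal (ly * Real.exp (-(ly*y))
          - (ly * lz * Real.exp (-(lx*L))) * (Real.exp (-(a*y)) / (lz + c*y))) := by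
    intro y hy
    have hy0 : 0 < y := hΛ.trans hy
    have hsec : Prod.mk y ⁻¹' A = {q : ℝ × ℝ | q.2 < q.1*y*K + y*M + L} := by
      ext q; simp only [hA_def, mem_preimage, mem_setOf_eq, and_iff_left (show y > Λ from hy)]
    rw [hsec, aux_inner hlx hlz hy0 hK hM hL, exponentialPDF_of_nonneg hy0.le,
      ← ENNReal.ofReal_mul (by positivity)]
    congr 1
    have hD : 0 < lz + lx * (y * K) := by positivity
    have e1 : Real.exp (-(ly*y)) * Real.exp (-(lx*(y*M+L)))
        = Real.exp (-(lx*L)) * Real.exp (-(a*y)) := by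
      rw [← Real.exp_add, ← Real.exp_add]; congr 1; rw [ha_def]; ring
    have hD2 : lz + c * y = lz + lx * (y * K) := by rw [hc_def]; ring
    rw [mul_sub, mul_one, hD2]
    congr 1
    rw [← mul_div_assoc, ← mul_div_assoc]
    congr 1
    calc ly * Real.exp (-(ly*y)) * (lz * Real.exp (-(lx*(y*M+L))))
        = ly * lz * (Real.exp (-(ly*y)) * Real.exp (-(lx*(y*M+L)))) := by ring
      _ = ly * lz * (Real.exp (-(lx*L)) * Real.exp (-(a*y))) := by rw [e1]
      _ = ly * lz * Real.exp (-(lx*L)) * Real.exp (-(a*y)) := by ring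
  rw [setLIntegral_congr_fun measurableSet_Ioi hptw]
  -- convert to a real integral
  have hint1 : IntegrableOn (fun y => ly * Real.exp (-(ly*y))) (Ioi Λ) := by
    have h := (exp_neg_integrableOn_Ioi Λ hly).const_mul ly
    simp only [neg_mul] at h
    exact h
  have hint2 : IntegrableOn
      (fun y => (ly * lz * Real.exp (-(lx*L))) * (Real.exp (-(a*y)) / (lz + c*y)))
      (Ioi Λ) := (aux_int2 ha hc hlz hΛ).const_mul _
  have hnn : ∀ y ∈ Ioi Λ, 0 ≤ ly * Real.exp (-(ly*y))
      - (ly * lz * Real.exp (-(lx*L))) * (Real.exp (-(a*y)) / (lz + c*y)) := by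
    intro y hy
    have hy0 : 0 < y := hΛ.trans hy
    have hcy : 0 < c * y := mul_pos hc hy0
    have hD : 0 < lz + c * y := by linarith
    rw [sub_nonneg]
    have h1 : Real.exp (-(a*y)) / (lz + c*y) ≤ Real.exp (-(a*y)) / lz :=
      div_le_div_of_nonneg_left (Real.exp_pos _).le hlz (by linarith)
    calc (ly * lz * Real.exp (-(lx*L))) * (Real.exp (-(a*y)) / (lz + c*y))
        ≤ (ly * lz * Real.exp (-(lx*L))) * (Real.exp (-(a*y)) / lz) := by
          apply mul_le_mul_of_nonneg_left h1 (by positivity)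
      _ = ly * (Real.exp (-(lx*L)) * Real.exp (-(a*y))) := by field_simp
      _ = ly * Real.exp (-(lx*L) + -(a*y)) := by rw [Real.exp_add]
      _ ≤ ly * Real.exp (-(ly*y)) := by
          apply mul_le_mul_of_nonneg_left _ hly.le
          apply Real.exp_le_exp.mpr
          have h2 : 0 ≤ lx * L := by positivity
          have h3 : 0 ≤ lx * M * y := by positivity
          rw [ha_def]; nlinarith
  have hint : IntegrableOn (fun y => ly * Real.exp (-(ly*y))
      - (ly * lz * Real.exp (-(lx*L))) * (Real.exp (-(a*y)) / (lz + c*y))) (Ioi Λ) :=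
    hint1.sub hint2
  rw [← ofReal_integral_eq_lintegral_ofReal hint
    (by filter_upwards [ae_restrict_mem measurableSet_Ioi] with y hy using hnn y hy)]
  rw [aux_y ha hc hlz hly hΛ]
  -- final algebraic identification
  congr 1
  have hξ' : ξ = a / c := by
    rw [hξ, ha_def, hc_def]; field_simp; ring
  have hmξ : lz * (a/c) + a * Λ = m * ξ := by
    rw [hξ', hm, hc_def]; field_simp
  have hEi : Ei (-(m * ξ)) = -∫ s in Ioi (lz*(a/c) + a*Λ), Real.exp (-s) / s := by
    simp only [Ei, neg_neg, hmξ]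
  rw [hEi, hmξ]
  have hexp : Real.exp (-lx * (L + Λ * M) - ly * Λ) * Real.exp (m * ξ)
      = Real.exp (-(lx*L)) * Real.exp (lz * (a/c)) := by
    rw [← Real.exp_add, ← Real.exp_add]
    congr 1
    rw [← hmξ, ha_def, hc_def]
    field_simp
    ring
  set I : ℝ := ∫ s in Ioi (m * ξ), Real.exp (-s) / s with hI
  rw [show (-ly*Λ) = (-(ly*Λ)) by ring]
  linear_combination (ly*lz*I/c) * hexp
end

section
/- Let X ~ Exp(λx), Y ~ Exp(λy), Z ~ Exp(λz) be independent, and let K_Δ, M_Δ, K_Υ, M_Υ > 0, L ≥ 0, Λ > 0. Then Pr[X < Z K_Δ + M_Δ + L, Y < Λ] + Pr[X < Z Y K_Υ + Y M_Υ + L, Y > Λ] = 1 − (λz e^{−λx(M_Δ+L)}/(λz + λx K_Δ))(1 − e^{−λy Λ}) + (λy λz Ei(−μξ)/(λx K_Υ)) e^{−Λ(λy + λx M_Υ) − λx L + μξ}, where μ = λz + λx Λ K_Υ and ξ = M_Υ/K_Υ + λy/(λx K_Υ). -/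
open MeasureTheory ProbabilityTheory Real

set_option maxHeartbeats 1000000

open Set

namespace EiHelp

noncomputable def expCDF (a c : ℝ) : ℝ := if 0 ≤ c then 1 - Real.exp (-(a * c)) else 0

lemma measurable_expCDF (a : ℝ) : Measurable (expCDF a) := by
  unfold expCDF
  exact Measurable.ite (measurableSet_le measurable_const measurable_id) (by fun_prop)
    measurable_const

lemma expMeasure_eq (r : ℝ) : expMeasure r = volume.withDensity (exponentialPDF r) := rfl

lemma measurable_exponentialPDF (r : ℝ) : Measurable (exponentialPDF r) :=
  (measurable_exponentialPDFReal r).ennreal_ofReal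

lemma integral_exp_neg_mul_Ioi {b : ℝ} (hb : 0 < b) (a : ℝ) :
    ∫ x in Ioi a, Real.exp (-(b * x)) = Real.exp (-(b * a)) / b := by
  have h := integral_comp_mul_left_Ioi (fun t => Real.exp (-t)) a hb
  simp only [smul_eq_mul] at h
  rw [h, integral_exp_neg_Ioi, inv_mul_eq_div]

lemma integral_comp_add_right_Ioi (f : ℝ → ℝ) (a d : ℝ) :
    ∫ x in Ioi a, f (x + d) = ∫ x in Ioi (a + d), f x := by
  rw [← integral_indicator measurableSet_Ioi, ← integral_indicator measurableSet_Ioi,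
    ← integral_add_right_eq_self ((Ioi (a + d)).indicator f) d]
  congr 1
  ext x
  by_cases h : a < x
  · rw [indicator_of_mem (mem_Ioi.mpr h), indicator_of_mem (mem_Ioi.mpr (by linarith))]
  · rw [indicator_of_notMem (by simpa using h),
      indicator_of_notMem (by simp only [mem_Ioi, not_lt] at h ⊢; linarith)]


lemma expInt {b : ℝ} (hb : 0 < b) (a : ℝ) :
    IntegrableOn (fun x => Real.exp (-(b * x))) (Ioi a) := by
  have h := exp_neg_integrableOn_Ioi a hb
  simpa [neg_mul] using h

lemma lintegral_expCDF_affine {a r K C : ℝ} (ha : 0 < a) (hr : 0 < r) (hK : 0 < K)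
    (hC : 0 ≤ C) :
    ∫⁻ z, ENNReal.ofReal (expCDF a (z * K + C)) ∂(expMeasure r)
      = ENNReal.ofReal (1 - r * Real.exp (-(a * C)) / (r + a * K)) := by
  have hra : 0 < r + a * K := by positivity
  have hgm : Measurable fun z : ℝ => ENNReal.ofReal (expCDF a (z * K + C)) :=
    ((measurable_expCDF a).comp (by fun_prop)).ennreal_ofReal
  rw [expMeasure_eq, lintegral_withDensity_eq_lintegral_mul _ (measurable_exponentialPDF r) hgm]
  simp only [Pi.mul_apply]
  have hsplit := lintegral_add_compl (μ := (volume : Measure ℝ))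
    (f := fun z => exponentialPDF r z * ENNReal.ofReal (expCDF a (z * K + C)))
    (measurableSet_Iio (a := (0:ℝ)))
  rw [← hsplit]
  have hzero : ∫⁻ z in Iio (0:ℝ),
      exponentialPDF r z * ENNReal.ofReal (expCDF a (z * K + C)) = 0 := by
    rw [setLIntegral_congr_fun_ae (f := fun z => exponentialPDF r z
        * ENNReal.ofReal (expCDF a (z * K + C))) (g := fun _ => 0) measurableSet_Iio
      (ae_of_all _ (fun z (hz : z < 0) => by
        simp [exponentialPDF_of_neg hz]))]
    simp
  rw [hzero, zero_add, compl_Iio,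
    setLIntegral_congr (Ioi_ae_eq_Ici (a := (0:ℝ))).symm]
  have hd : ∀ z ∈ Ioi (0:ℝ),
      exponentialPDF r z * ENNReal.ofReal (expCDF a (z * K + C))
      = ENNReal.ofReal (r * Real.exp (-(r * z))
          - (r * Real.exp (-(a * C))) * Real.exp (-((r + a * K) * z))) := by
    intro z hz
    have hz0 : (0:ℝ) ≤ z := le_of_lt hz
    have harg : 0 ≤ z * K + C := by positivity
    rw [exponentialPDF_of_nonneg hz0, expCDF, if_pos harg,
      ← ENNReal.ofReal_mul (by positivity)]
    congr 1
    have hkey : Real.exp (-(r * z)) * Real.exp (-(a * (z * K + C)))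
        = Real.exp (-(a * C)) * Real.exp (-((r + a * K) * z)) := by
      rw [← Real.exp_add, ← Real.exp_add]; congr 1; ring
    rw [mul_sub, mul_one]
    rw [mul_assoc, hkey, mul_assoc]
  rw [setLIntegral_congr_fun_ae measurableSet_Ioi (ae_of_all _ hd)]
  have hint : IntegrableOn (fun z => r * Real.exp (-(r * z))
      - (r * Real.exp (-(a * C))) * Real.exp (-((r + a * K) * z))) (Ioi (0:ℝ)) :=
    ((expInt hr 0).const_mul r).sub
      ((expInt hra 0).const_mul _)
  have hnn : 0 ≤ᵐ[volume.restrict (Ioi (0:ℝ))] fun z => r * Real.exp (-(r * z))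
      - (r * Real.exp (-(a * C))) * Real.exp (-((r + a * K) * z)) := by
    refine (ae_restrict_iff' measurableSet_Ioi).mpr (ae_of_all _ fun z hz => ?_)
    have hz0 : (0:ℝ) < z := hz
    simp only [Pi.zero_apply]
    rw [sub_nonneg, mul_assoc, ← Real.exp_add]
    refine mul_le_mul_of_nonneg_left (Real.exp_le_exp.mpr ?_) hr.le
    nlinarith [mul_nonneg ha.le hC, mul_pos (mul_pos ha hK) hz0]
  rw [← ofReal_integral_eq_lintegral_ofReal (μ := volume.restrict (Ioi (0:ℝ)))
    (f := fun z => r * Real.exp (-(r * z))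
      - (r * Real.exp (-(a * C))) * Real.exp (-((r + a * K) * z))) hint hnn]
  congr 1
  rw [integral_sub ((expInt hr 0).const_mul r)
    ((expInt hra 0).const_mul _), integral_const_mul, integral_const_mul,
    integral_exp_neg_mul_Ioi hr, integral_exp_neg_mul_Ioi hra]
  simp only [mul_zero, neg_zero, Real.exp_zero]
  field_simp


lemma integral_H {c d ξ Λ : ℝ} (hc : 0 < c) (hd : 0 < d) (hξ : 0 < ξ) (hΛ : 0 < Λ) :
    ∫ y in Ioi Λ, Real.exp (-((d * ξ) * y)) / (c + d * y)
      = d⁻¹ * Real.exp (ξ * c) * (-Ei (-((c + d * Λ) * ξ))) := by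
  have key : ∀ y : ℝ, Real.exp (-((d * ξ) * y)) / (c + d * y)
      = ξ * (Real.exp (-((ξ * d) * y)) / (ξ * c + (ξ * d) * y)) := by
    intro y
    have h3 : -((d * ξ) * y) = -((ξ * d) * y) := by ring
    have h2 : ξ * c + (ξ * d) * y = ξ * (c + d * y) := by ring
    rw [h3, h2]
    rcases eq_or_ne (c + d * y) 0 with h | h
    · simp [h]
    · rw [← mul_div_assoc, mul_div_mul_left _ _ hξ.ne']
  rw [setIntegral_congr_fun measurableSet_Ioi (fun y _ => key y), integral_const_mul]
  have hξd : 0 < ξ * d := by positivity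
  have hcomp := integral_comp_mul_left_Ioi (fun u => Real.exp (-u) / (ξ * c + u)) Λ hξd
  simp only [smul_eq_mul] at hcomp
  rw [hcomp]
  have shiftfun : ∀ u : ℝ, Real.exp (-u) / (ξ * c + u)
      = Real.exp (ξ * c) * ((fun t => Real.exp (-t) / t) (u + ξ * c)) := by
    intro u
    have h4 : Real.exp (ξ * c) * Real.exp (-(u + ξ * c)) = Real.exp (-u) := by
      rw [← Real.exp_add]; congr 1; ring
    simp only
    rw [← mul_div_assoc, h4, add_comm (ξ * c) u]
  rw [setIntegral_congr_fun measurableSet_Ioi (fun u _ => shiftfun u), integral_const_mul,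
    integral_comp_add_right_Ioi (fun t => Real.exp (-t) / t) (ξ * d * Λ) (ξ * c)]
  have hEi : ∫ t in Ioi (ξ * d * Λ + ξ * c), Real.exp (-t) / t
      = -Ei (-((c + d * Λ) * ξ)) := by
    rw [Ei, neg_neg, neg_neg]
    congr 1
    ring
  rw [hEi]
  field_simp

lemma expMeasure_singleton (r c : ℝ) : expMeasure r {c} = 0 := by
  rw [expMeasure_eq, withDensity_apply _ (measurableSet_singleton c),
    Measure.restrict_eq_zero.mpr (by simp), lintegral_zero_measure]

lemma expMeasure_Iio {r : ℝ} (hr : 0 < r) (c : ℝ) :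
    expMeasure r (Iio c) = ENNReal.ofReal (expCDF r c) := by
  have h1 : expMeasure r (Iic c) = ENNReal.ofReal (expCDF r c) := by
    rw [expMeasure_eq, withDensity_apply _ measurableSet_Iic]
    unfold expCDF
    exact lintegral_exponentialPDF_eq_antiDeriv hr c
  rw [← h1]
  refine le_antisymm (measure_mono Iio_subset_Iic_self) ?_
  calc expMeasure r (Iic c) = expMeasure r (Iio c ∪ {c}) := by rw [Iio_union_right]
    _ ≤ expMeasure r (Iio c) + expMeasure r {c} := measure_union_le _ _
    _ = expMeasure r (Iio c) := by rw [expMeasure_singleton, add_zero]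


lemma P2_integrand_eq {lx ly lz KΥ MΥ L Λ ξ : ℝ} (hlx : 0 < lx) (hly : 0 < ly) (hlz : 0 < lz)
    (hKΥ : 0 < KΥ) (hMΥ : 0 < MΥ) (hL : 0 ≤ L) (hΛ : 0 < Λ)
    (hb : (lx * KΥ) * ξ = ly + lx * MΥ) :
    ∀ y ∈ Ioi Λ, ly * Real.exp (-(ly * y))
        * (1 - lz * Real.exp (-(lx * (y * MΥ + L))) / (lz + lx * (y * KΥ)))
      = ly * Real.exp (-(ly * y)) - (ly * lz * Real.exp (-(lx * L)))
          * (Real.exp (-(((lx * KΥ) * ξ) * y)) / (lz + (lx * KΥ) * y)) := by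
  intro y hy
  have hden' : lz + (lx * KΥ) * y = lz + lx * (y * KΥ) := by ring
  rw [hden', mul_sub, mul_one]
  congr 1
  rw [← mul_div_assoc, ← mul_div_assoc]
  congr 1
  have hkey : Real.exp (-(ly * y)) * Real.exp (-(lx * (y * MΥ + L)))
      = Real.exp (-(lx * L)) * Real.exp (-(((lx * KΥ) * ξ) * y)) := by
    rw [hb, ← Real.exp_add, ← Real.exp_add]
    congr 1
    ring
  linear_combination (ly * lz) * hkey

lemma integral_P2 {lx ly lz KΥ MΥ L Λ ξ m : ℝ} (hlx : 0 < lx) (hly : 0 < ly) (hlz : 0 < lz)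
    (hKΥ : 0 < KΥ) (hMΥ : 0 < MΥ) (hL : 0 ≤ L) (hΛ : 0 < Λ)
    (hm : m = lz + lx * Λ * KΥ) (hξ : ξ = MΥ / KΥ + ly / (lx * KΥ)) :
    ∫ y in Ioi Λ, ly * Real.exp (-(ly * y))
        * (1 - lz * Real.exp (-(lx * (y * MΥ + L))) / (lz + lx * (y * KΥ)))
      = Real.exp (-(ly * Λ))
        + ly * lz / (lx * KΥ) * Real.exp (-(lx * L) + ξ * lz) * Ei (-(m * ξ)) := by
  have hξpos : 0 < ξ := by rw [hξ]; positivity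
  have hb : (lx * KΥ) * ξ = ly + lx * MΥ := by
    rw [hξ]; field_simp; ring
  have hbpos : 0 < (lx * KΥ) * ξ := by positivity
  rw [setIntegral_congr_fun measurableSet_Ioi
    (P2_integrand_eq hlx hly hlz hKΥ hMΥ hL hΛ hb)]
  have int1 : IntegrableOn (fun y => ly * Real.exp (-(ly * y))) (Ioi Λ) :=
    (expInt hly Λ).const_mul ly
  have intH : IntegrableOn (fun y => Real.exp (-(((lx * KΥ) * ξ) * y)) / (lz + (lx * KΥ) * y))
      (Ioi Λ) := by
    refine Integrable.mono ((expInt hbpos Λ).const_mul lz⁻¹)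
      (Measurable.aestronglyMeasurable (by fun_prop)) ?_
    refine (ae_restrict_iff' measurableSet_Ioi).mpr (ae_of_all _ fun y hy => ?_)
    have hy0 : 0 < y := hΛ.trans hy
    have hD : 0 < lz + (lx * KΥ) * y := by positivity
    rw [Real.norm_eq_abs, Real.norm_eq_abs, abs_of_nonneg (by positivity),
      abs_of_nonneg (by positivity), inv_mul_eq_div]
    gcongr
    linarith [mul_pos (mul_pos hlx hKΥ) hy0]
  have int2 : IntegrableOn (fun y => (ly * lz * Real.exp (-(lx * L)))
      * (Real.exp (-(((lx * KΥ) * ξ) * y)) / (lz + (lx * KΥ) * y))) (Ioi Λ) :=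
    intH.const_mul _
  rw [integral_sub int1 int2, integral_const_mul, integral_const_mul,
    integral_exp_neg_mul_Ioi hly, integral_H hlz (by positivity) hξpos hΛ]
  have hEiarg : (lz + (lx * KΥ) * Λ) * ξ = m * ξ := by rw [hm]; ring
  rw [hEiarg, mul_div_cancel₀ _ hly.ne', Real.exp_add]
  field_simp
  ring

lemma prob_eq {lx : ℝ} (hlx : 0 < lx) (νyz : Measure (ℝ × ℝ)) [IsFiniteMeasure νyz]
    {g : ℝ × ℝ → ℝ} (hg : Measurable g) {T : Set (ℝ × ℝ)} (hT : MeasurableSet T) :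
    ((expMeasure lx).prod νyz) {p : ℝ × ℝ × ℝ | p.1 < g p.2 ∧ p.2 ∈ T}
      = ∫⁻ p in T, ENNReal.ofReal (expCDF lx (g p)) ∂νyz := by
  haveI := isProbabilityMeasure_expMeasure hlx
  have hS : MeasurableSet {p : ℝ × ℝ × ℝ | p.1 < g p.2 ∧ p.2 ∈ T} :=
    (measurableSet_lt measurable_fst (hg.comp measurable_snd)).inter (measurable_snd hT)
  rw [Measure.prod_apply_symm hS, ← lintegral_indicator hT]
  congr 1
  ext p
  by_cases hp : p ∈ T
  · have hpre : (fun x => (x, p)) ⁻¹' {p : ℝ × ℝ × ℝ | p.1 < g p.2 ∧ p.2 ∈ T} = Iio (g p) := by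
      ext x; simp [hp]
    rw [hpre, expMeasure_Iio hlx, indicator_of_mem hp]
  · have hpre : (fun x => (x, p)) ⁻¹' {p : ℝ × ℝ × ℝ | p.1 < g p.2 ∧ p.2 ∈ T} = ∅ := by
      ext x; simp [hp]
    rw [hpre, indicator_of_notMem hp]
    simp

lemma lintegral_P2 {lx ly lz KΥ MΥ L Λ : ℝ} (hlx : 0 < lx) (hly : 0 < ly) (hlz : 0 < lz)
    (hKΥ : 0 < KΥ) (hMΥ : 0 < MΥ) (hL : 0 ≤ L) (hΛ : 0 < Λ)
    (hbe : ∃ ξ, (lx * KΥ) * ξ = ly + lx * MΥ) :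
    ∫⁻ y in Ioi Λ, ENNReal.ofReal
        (1 - lz * Real.exp (-(lx * (y * MΥ + L))) / (lz + lx * (y * KΥ))) ∂(expMeasure ly)
      = ENNReal.ofReal (∫ y in Ioi Λ, ly * Real.exp (-(ly * y))
        * (1 - lz * Real.exp (-(lx * (y * MΥ + L))) / (lz + lx * (y * KΥ)))) := by
  obtain ⟨ξ, hb⟩ := hbe
  have hξpos : 0 < ξ := by
    have h2 : ξ = (ly + lx * MΥ) / (lx * KΥ) := by
      rw [eq_div_iff (by positivity : (lx * KΥ) ≠ 0)]
      linear_combination hb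
    rw [h2]; positivity
  have hbpos : 0 < (lx * KΥ) * ξ := by positivity
  have hg : Measurable fun y : ℝ => ENNReal.ofReal
      (1 - lz * Real.exp (-(lx * (y * MΥ + L))) / (lz + lx * (y * KΥ))) := by
    apply Measurable.ennreal_ofReal; fun_prop
  rw [expMeasure_eq, restrict_withDensity measurableSet_Ioi,
    lintegral_withDensity_eq_lintegral_mul _ (measurable_exponentialPDF ly) hg]
  simp only [Pi.mul_apply]
  have h1 : ∀ y ∈ Ioi Λ, exponentialPDF ly y * ENNReal.ofReal
      (1 - lz * Real.exp (-(lx * (y * MΥ + L))) / (lz + lx * (y * KΥ)))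
      = ENNReal.ofReal (ly * Real.exp (-(ly * y))
        * (1 - lz * Real.exp (-(lx * (y * MΥ + L))) / (lz + lx * (y * KΥ)))) := by
    intro y hy
    have hy0 : (0:ℝ) ≤ y := (hΛ.trans hy).le
    rw [exponentialPDF_of_nonneg hy0, ← ENNReal.ofReal_mul (by positivity)]
  rw [setLIntegral_congr_fun_ae measurableSet_Ioi (ae_of_all _ h1)]
  have int1 : IntegrableOn (fun y => ly * Real.exp (-(ly * y))) (Ioi Λ) :=
    (expInt hly Λ).const_mul ly
  have intH : IntegrableOn
      (fun y => Real.exp (-(((lx * KΥ) * ξ) * y)) / (lz + (lx * KΥ) * y)) (Ioi Λ) := by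
    refine Integrable.mono ((expInt hbpos Λ).const_mul lz⁻¹)
      (Measurable.aestronglyMeasurable (by fun_prop)) ?_
    refine (ae_restrict_iff' measurableSet_Ioi).mpr (ae_of_all _ fun y hy => ?_)
    have hy0 : 0 < y := hΛ.trans hy
    have hD : 0 < lz + (lx * KΥ) * y := by positivity
    rw [Real.norm_eq_abs, Real.norm_eq_abs, abs_of_nonneg (by positivity),
      abs_of_nonneg (by positivity), inv_mul_eq_div]
    gcongr
    linarith [mul_pos (mul_pos hlx hKΥ) hy0]
  have int2 : IntegrableOn (fun y => (ly * lz * Real.exp (-(lx * L)))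
      * (Real.exp (-(((lx * KΥ) * ξ) * y)) / (lz + (lx * KΥ) * y))) (Ioi Λ) :=
    intH.const_mul _
  have hint : IntegrableOn (fun y => ly * Real.exp (-(ly * y))
      * (1 - lz * Real.exp (-(lx * (y * MΥ + L))) / (lz + lx * (y * KΥ)))) (Ioi Λ) := by
    apply (int1.sub int2).congr
    refine (ae_restrict_iff' measurableSet_Ioi).mpr (ae_of_all _ fun y hy => ?_)
    exact (P2_integrand_eq hlx hly hlz hKΥ hMΥ hL hΛ hb y hy).symm
  have hnn : 0 ≤ᵐ[volume.restrict (Ioi Λ)] fun y => ly * Real.exp (-(ly * y))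
      * (1 - lz * Real.exp (-(lx * (y * MΥ + L))) / (lz + lx * (y * KΥ))) := by
    refine (ae_restrict_iff' measurableSet_Ioi).mpr (ae_of_all _ fun y hy => ?_)
    have hy0 : 0 < y := hΛ.trans hy
    have hD : 0 < lz + lx * (y * KΥ) := by positivity
    have he1 : Real.exp (-(lx * (y * MΥ + L))) ≤ 1 :=
      Real.exp_le_one_iff.mpr (neg_nonpos.mpr (by positivity))
    simp only [Pi.zero_apply]
    apply mul_nonneg (by positivity)
    rw [sub_nonneg, div_le_one hD]
    nlinarith [mul_pos hlx (mul_pos hy0 hKΥ)]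
  rw [← ofReal_integral_eq_lintegral_ofReal (μ := volume.restrict (Ioi Λ))
    (f := fun y => ly * Real.exp (-(ly * y))
      * (1 - lz * Real.exp (-(lx * (y * MΥ + L))) / (lz + lx * (y * KΥ)))) hint hnn]

end EiHelp

open EiHelp

theorem stmt6
    {Ω : Type*} [MeasurableSpace Ω] (μ : Measure Ω) [IsProbabilityMeasure μ]
    (X Y Z : Ω → ℝ) (hX : Measurable X) (hY : Measurable Y) (hZ : Measurable Z)
    (hind : iIndepFun ![X, Y, Z] μ)
    (lx ly lz : ℝ) (hlx : 0 < lx) (hly : 0 < ly) (hlz : 0 < lz)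
    (hXlaw : Measure.map X μ = expMeasure lx)
    (hYlaw : Measure.map Y μ = expMeasure ly)
    (hZlaw : Measure.map Z μ = expMeasure lz)
    (KΔ MΔ KΥ MΥ L Λ : ℝ) (hKΔ : 0 < KΔ) (hMΔ : 0 < MΔ) (hKΥ : 0 < KΥ)
    (hMΥ : 0 < MΥ) (hL : 0 ≤ L) (hΛ : 0 < Λ)
    (m ξ : ℝ) (hm : m = lz + lx * Λ * KΥ) (hξ : ξ = MΥ / KΥ + ly / (lx * KΥ)) :
    (μ {ω | X ω < Z ω * KΔ + MΔ + L ∧ Y ω < Λ}).toReal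
      + (μ {ω | X ω < Z ω * Y ω * KΥ + Y ω * MΥ + L ∧ Y ω > Λ}).toReal
      = 1 - (lz * Real.exp (-lx * (MΔ + L)) / (lz + lx * KΔ)) * (1 - Real.exp (-ly * Λ))
        + (ly * lz * Ei (-(m * ξ)) / (lx * KΥ))
            * Real.exp (-Λ * (ly + lx * MΥ) - lx * L + m * ξ) := by
  haveI hPx := isProbabilityMeasure_expMeasure hlx
  haveI hPy := isProbabilityMeasure_expMeasure hly
  haveI hPz := isProbabilityMeasure_expMeasure hlz
  have hmeas : ∀ i, Measurable (![X, Y, Z] i) := by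
    intro i; fin_cases i <;> simpa
  have hYZ : IndepFun Y Z μ := by
    simpa using hind.indepFun (show (1 : Fin 3) ≠ 2 by decide)
  have hXYZ : IndepFun X (fun ω => (Y ω, Z ω)) μ := by
    have h := (hind.indepFun_prodMk hmeas 1 2 0 (by decide) (by decide)).symm
    simpa using h
  have hmapYZ : μ.map (fun ω => (Y ω, Z ω)) = (expMeasure ly).prod (expMeasure lz) := by
    rw [← hYlaw, ← hZlaw]
    exact (indepFun_iff_map_prod_eq_prod_map_map hY.aemeasurable hZ.aemeasurable).mp hYZ
  have hmapW : μ.map (fun ω => (X ω, (Y ω, Z ω)))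
      = (expMeasure lx).prod ((expMeasure ly).prod (expMeasure lz)) := by
    rw [← hXlaw, ← hmapYZ]
    exact (indepFun_iff_map_prod_eq_prod_map_map hX.aemeasurable
      (hY.prodMk hZ).aemeasurable).mp hXYZ
  have hW : Measurable (fun ω => (X ω, (Y ω, Z ω))) := hX.prodMk (hY.prodMk hZ)
  have hg1 : Measurable (fun q : ℝ × ℝ => q.2 * KΔ + MΔ + L) := by fun_prop
  have hg2 : Measurable (fun q : ℝ × ℝ => q.2 * q.1 * KΥ + q.1 * MΥ + L) := by fun_prop
  have hT1 : MeasurableSet ((Iio Λ) ×ˢ (univ : Set ℝ)) :=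
    measurableSet_Iio.prod MeasurableSet.univ
  have hT2 : MeasurableSet ((Ioi Λ) ×ˢ (univ : Set ℝ)) :=
    measurableSet_Ioi.prod MeasurableSet.univ
  have hS1 : MeasurableSet {p : ℝ × ℝ × ℝ |
      p.1 < (fun q : ℝ × ℝ => q.2 * KΔ + MΔ + L) p.2 ∧ p.2 ∈ (Iio Λ) ×ˢ (univ : Set ℝ)} :=
    (measurableSet_lt measurable_fst (hg1.comp measurable_snd)).inter (measurable_snd hT1)
  have hS2 : MeasurableSet {p : ℝ × ℝ × ℝ |
      p.1 < (fun q : ℝ × ℝ => q.2 * q.1 * KΥ + q.1 * MΥ + L) p.2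
        ∧ p.2 ∈ (Ioi Λ) ×ˢ (univ : Set ℝ)} :=
    (measurableSet_lt measurable_fst (hg2.comp measurable_snd)).inter (measurable_snd hT2)
  -- event rewriting
  have hE1 : {ω | X ω < Z ω * KΔ + MΔ + L ∧ Y ω < Λ}
      = (fun ω => (X ω, (Y ω, Z ω))) ⁻¹' {p : ℝ × ℝ × ℝ |
          p.1 < (fun q : ℝ × ℝ => q.2 * KΔ + MΔ + L) p.2
            ∧ p.2 ∈ (Iio Λ) ×ˢ (univ : Set ℝ)} := by
    ext ω; simp
  have hE2 : {ω | X ω < Z ω * Y ω * KΥ + Y ω * MΥ + L ∧ Y ω > Λ}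
      = (fun ω => (X ω, (Y ω, Z ω))) ⁻¹' {p : ℝ × ℝ × ℝ |
          p.1 < (fun q : ℝ × ℝ => q.2 * q.1 * KΥ + q.1 * MΥ + L) p.2
            ∧ p.2 ∈ (Ioi Λ) ×ˢ (univ : Set ℝ)} := by
    ext ω; simp [and_comm]
  -- P1 computation
  have hP1 : μ {ω | X ω < Z ω * KΔ + MΔ + L ∧ Y ω < Λ}
      = ENNReal.ofReal (1 - lz * Real.exp (-(lx * (MΔ + L))) / (lz + lx * KΔ))
        * ENNReal.ofReal (1 - Real.exp (-(ly * Λ))) := by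
    rw [hE1, ← Measure.map_apply hW hS1, hmapW, prob_eq hlx _ hg1 hT1,
      ← Measure.prod_restrict, Measure.restrict_univ]
    have hf1 : Measurable fun p : ℝ × ℝ => ENNReal.ofReal (expCDF lx (p.2 * KΔ + MΔ + L)) := by
      apply Measurable.ennreal_ofReal
      exact (measurable_expCDF lx).comp (by fun_prop)
    rw [lintegral_prod _ hf1.aemeasurable]
    simp only
    have inner : ∫⁻ z, ENNReal.ofReal (expCDF lx (z * KΔ + MΔ + L)) ∂(expMeasure lz)
        = ENNReal.ofReal (1 - lz * Real.exp (-(lx * (MΔ + L))) / (lz + lx * KΔ)) := by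
      have h := lintegral_expCDF_affine hlx hlz hKΔ
        (show (0:ℝ) ≤ MΔ + L by positivity)
      rw [← h]
      apply lintegral_congr
      intro z
      rw [add_assoc]
    rw [inner, lintegral_const, Measure.restrict_apply_univ, expMeasure_Iio hly]
    congr 1
    unfold expCDF
    rw [if_pos hΛ.le]
  -- P2 computation
  have hP2 : μ {ω | X ω < Z ω * Y ω * KΥ + Y ω * MΥ + L ∧ Y ω > Λ}
      = ENNReal.ofReal (∫ y in Ioi Λ, ly * Real.exp (-(ly * y))
        * (1 - lz * Real.exp (-(lx * (y * MΥ + L))) / (lz + lx * (y * KΥ)))) := by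
    rw [hE2, ← Measure.map_apply hW hS2, hmapW, prob_eq hlx _ hg2 hT2,
      ← Measure.prod_restrict, Measure.restrict_univ]
    have hf2 : Measurable fun p : ℝ × ℝ =>
        ENNReal.ofReal (expCDF lx (p.2 * p.1 * KΥ + p.1 * MΥ + L)) := by
      apply Measurable.ennreal_ofReal
      exact (measurable_expCDF lx).comp (by fun_prop)
    rw [lintegral_prod _ hf2.aemeasurable]
    simp only
    have inner : ∀ y ∈ Ioi Λ,
        ∫⁻ z, ENNReal.ofReal (expCDF lx (z * y * KΥ + y * MΥ + L)) ∂(expMeasure lz)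
        = ENNReal.ofReal (1 - lz * Real.exp (-(lx * (y * MΥ + L))) / (lz + lx * (y * KΥ))) := by
      intro y hy
      have hy0 : 0 < y := hΛ.trans hy
      have h := lintegral_expCDF_affine hlx hlz (show 0 < y * KΥ by positivity)
        (show (0:ℝ) ≤ y * MΥ + L by positivity)
      rw [← h]
      apply lintegral_congr
      intro z
      congr 2
      ring
    rw [setLIntegral_congr_fun_ae measurableSet_Ioi (ae_of_all _ inner),
      lintegral_P2 hlx hly hlz hKΥ hMΥ hL hΛ ⟨ξ, by rw [hξ]; field_simp; ring⟩]
  -- assembly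
  rw [hP1, hP2]
  have hB1 : 0 ≤ 1 - lz * Real.exp (-(lx * (MΔ + L))) / (lz + lx * KΔ) := by
    rw [sub_nonneg, div_le_one (by positivity)]
    have h1 : Real.exp (-(lx * (MΔ + L))) ≤ 1 :=
      Real.exp_le_one_iff.mpr (neg_nonpos.mpr (by positivity))
    nlinarith [mul_pos hlx hKΔ]
  have hB2 : 0 ≤ 1 - Real.exp (-(ly * Λ)) := by
    rw [sub_nonneg]
    exact Real.exp_le_one_iff.mpr (neg_nonpos.mpr (by positivity))
  have hI2 : 0 ≤ ∫ y in Ioi Λ, ly * Real.exp (-(ly * y))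
      * (1 - lz * Real.exp (-(lx * (y * MΥ + L))) / (lz + lx * (y * KΥ))) := by
    apply setIntegral_nonneg measurableSet_Ioi
    intro y hy
    have hy0 : 0 < y := hΛ.trans hy
    have hD : 0 < lz + lx * (y * KΥ) := by positivity
    apply mul_nonneg (by positivity)
    rw [sub_nonneg, div_le_one hD]
    have h1 : Real.exp (-(lx * (y * MΥ + L))) ≤ 1 :=
      Real.exp_le_one_iff.mpr (neg_nonpos.mpr (by positivity))
    nlinarith [mul_pos hlx (mul_pos hy0 hKΥ)]
  rw [ENNReal.toReal_mul, ENNReal.toReal_ofReal hB1, ENNReal.toReal_ofReal hB2,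
    ENNReal.toReal_ofReal hI2, integral_P2 hlx hly hlz hKΥ hMΥ hL hΛ hm hξ]
  have hexp1 : -lx * (MΔ + L) = -(lx * (MΔ + L)) := by ring
  have hexp2 : -ly * Λ = -(ly * Λ) := by ring
  have hexp3 : -Λ * (ly + lx * MΥ) - lx * L + m * ξ = -(lx * L) + ξ * lz := by
    rw [hm, hξ]
    field_simp
    ring
  rw [hexp1, hexp2, hexp3]
  ring
end
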